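/- For every attribute c ∈ C: c belongs to every (α,β) upper distribution reduct of C (i.e., c lies in the (α,β) upper distribution core) if and only if μ_{C∖{c}} ≠ μ_C. -/

import Mathlib

/-- The indiscernibility class `[x]_R` of `x` for the attribute subset `R`:
all objects agreeing with `x` on every attribute in `R`. -/
def cls {U V A : Type*} (f : A → U → V) (R : Finset A) (x : U) : Set U :=
  {y | ∀ a ∈ R, f a x = f a y}

/-- Classical lower approximation of `X` with respect to `IND(R)`. -/
def lowerA {U V A : Type*} (f : A → U → V) (R : Finset A) (X : Set U) : Set U :=
  {x | cls f R x ⊆ X}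

/-- Classical upper approximation of `X` with respect to `IND(R)`. -/
def upperA {U V A : Type*} (f : A → U → V) (R : Finset A) (X : Set U) : Set U :=
  {x | (cls f R x ∩ X).Nonempty}

/-- α-probabilistic lower approximation: `{x | |[x]_R ∩ X| ≥ α·|[x]_R|}`. -/
noncomputable def aprLow {U V A : Type*} (f : A → U → V) (R : Finset A) (α : ℝ)
    (X : Set U) : Set U :=
  {x | α * ((cls f R x).ncard : ℝ) ≤ (((cls f R x) ∩ X).ncard : ℝ)}

/-- β-probabilistic upper approximation: `{x | |[x]_R ∩ X| > β·|[x]_R|}`. -/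
noncomputable def aprUp {U V A : Type*} (f : A → U → V) (R : Finset A) (β : ℝ)
    (X : Set U) : Set U :=
  {x | β * ((cls f R x).ncard : ℝ) < (((cls f R x) ∩ X).ncard : ℝ)}

/-- `η_R = (Σ_{i=1}^M |lower_R(apr_C^α(Y_i))|)/(|U|·M)`, the sum running over the
decision classes `Y_i = d⁻¹(v)`, `v ∈ d(U)`. -/
noncomputable def eta {U V A : Type*} [Fintype U] [DecidableEq V] (f : A → U → V)
    (C : Finset A) (d : U → V) (α : ℝ) (R : Finset A) : ℝ :=
  (∑ v ∈ Finset.univ.image d,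
      ((lowerA f R (aprLow f C α (d ⁻¹' {v}))).ncard : ℝ)) /
    ((Fintype.card U : ℝ) * ((Finset.univ.image d).card : ℝ))

/-- `μ_R = (Σ_{i=1}^M |upper_R(Apr_C^β(Y_i))|)/(|U|·M)`, the sum running over the
decision classes `Y_i = d⁻¹(v)`, `v ∈ d(U)`. -/
noncomputable def mu {U V A : Type*} [Fintype U] [DecidableEq V] (f : A → U → V)
    (C : Finset A) (d : U → V) (β : ℝ) (R : Finset A) : ℝ :=
  (∑ v ∈ Finset.univ.image d,
      ((upperA f R (aprUp f C β (d ⁻¹' {v}))).ncard : ℝ)) /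
    ((Fintype.card U : ℝ) * ((Finset.univ.image d).card : ℝ))

/-- `R` is an (α,β) lower distribution consistent set:
`apr_R^α(Y_i) = apr_C^α(Y_i)` for every decision class `Y_i`. -/
def LowerConsistent {U V A : Type*} [Fintype U] [DecidableEq V] (f : A → U → V)
    (C : Finset A) (d : U → V) (α : ℝ) (R : Finset A) : Prop :=
  ∀ v ∈ Finset.univ.image d, aprLow f R α (d ⁻¹' {v}) = aprLow f C α (d ⁻¹' {v})

/-- `R` is an (α,β) upper distribution consistent set:
`Apr_R^β(Y_i) = Apr_C^β(Y_i)` for every decision class `Y_i`. -/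
def UpperConsistent {U V A : Type*} [Fintype U] [DecidableEq V] (f : A → U → V)
    (C : Finset A) (d : U → V) (β : ℝ) (R : Finset A) : Prop :=
  ∀ v ∈ Finset.univ.image d, aprUp f R β (d ⁻¹' {v}) = aprUp f C β (d ⁻¹' {v})

/-- `R` is an (α,β) lower distribution reduct: a lower distribution consistent set
no proper subset of which is lower distribution consistent. -/
def LowerReduct {U V A : Type*} [Fintype U] [DecidableEq V] (f : A → U → V)
    (C : Finset A) (d : U → V) (α : ℝ) (R : Finset A) : Prop :=
  LowerConsistent f C d α R ∧ ∀ R' ⊂ R, ¬ LowerConsistent f C d α R'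

/-- `R` is an (α,β) upper distribution reduct: an upper distribution consistent set
no proper subset of which is upper distribution consistent. -/
def UpperReduct {U V A : Type*} [Fintype U] [DecidableEq V] (f : A → U → V)
    (C : Finset A) (d : U → V) (β : ℝ) (R : Finset A) : Prop :=
  UpperConsistent f C d β R ∧ ∀ R' ⊂ R, ¬ UpperConsistent f C d β R'


set_option linter.unusedSectionVars false
section Aux
variable {U V A : Type*} [Fintype U]

lemma mem_cls_self (f : A → U → V) (R : Finset A) (x : U) : x ∈ cls f R x :=
  fun _ _ => rfl

lemma cls_eq_of_mem {f : A → U → V} {R : Finset A} {x y : U}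
    (h : y ∈ cls f R x) : cls f R y = cls f R x := by
  ext z
  constructor <;> intro hz a ha
  · exact (h a ha).trans (hz a ha)
  · exact (h a ha).symm.trans (hz a ha)

lemma mem_cls_comm {f : A → U → V} {R : Finset A} {x y : U} :
    y ∈ cls f R x ↔ x ∈ cls f R y :=
  ⟨fun h a ha => (h a ha).symm, fun h a ha => (h a ha).symm⟩

lemma cls_anti {f : A → U → V} {R S : Finset A} (h : R ⊆ S) (x : U) :
    cls f S x ⊆ cls f R x := fun _ hy a ha => hy a (h ha)

lemma cls_ncard_pos (f : A → U → V) (R : Finset A) (x : U) :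
    0 < (cls f R x).ncard :=
  (Set.ncard_pos (Set.toFinite _)).mpr ⟨x, mem_cls_self f R x⟩

lemma ncard_eq_card_filter (S : Set U) [DecidablePred (· ∈ S)] :
    S.ncard = (Finset.univ.filter (· ∈ S)).card := by
  rw [Set.ncard_eq_toFinset_card']
  congr 1
  ext x; simp

lemma sum_ratio (f : A → U → V) (C : Finset A) (Y T : Set U)
    (hsat : ∀ y ∈ T, cls f C y ⊆ T) :
    ∑ y ∈ (Set.toFinite T).toFinset,
        (((cls f C y ∩ Y).ncard : ℝ) / ((cls f C y).ncard : ℝ))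
      = ((T ∩ Y).ncard : ℝ) := by
  classical
  have key : ∀ y : U, (((cls f C y ∩ Y).ncard : ℝ) / ((cls f C y).ncard : ℝ))
      = ∑ z : U, if z ∈ cls f C y ∩ Y then ((cls f C y).ncard : ℝ)⁻¹ else 0 := by
    intro y
    rw [← Finset.sum_filter, Finset.sum_const, ncard_eq_card_filter (cls f C y ∩ Y)]
    simp [div_eq_mul_inv]
  simp_rw [key]
  rw [Finset.sum_comm]
  have inner : ∀ z : U, (∑ y ∈ (Set.toFinite T).toFinset,
      if z ∈ cls f C y ∩ Y then ((cls f C y).ncard : ℝ)⁻¹ else 0)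
      = if z ∈ T ∩ Y then 1 else 0 := by
    intro z
    by_cases hz : z ∈ T ∩ Y
    · rw [if_pos hz]
      obtain ⟨hzT, hzY⟩ := hz
      have congr1 : ∀ y ∈ (Set.toFinite T).toFinset,
          (if z ∈ cls f C y ∩ Y then ((cls f C y).ncard : ℝ)⁻¹ else 0)
          = (if y ∈ cls f C z then ((cls f C z).ncard : ℝ)⁻¹ else 0) := by
        intro y _
        by_cases hyz : y ∈ cls f C z
        · have hzy : z ∈ cls f C y := mem_cls_comm.mp hyz
          rw [if_pos ⟨hzy, hzY⟩, if_pos hyz, cls_eq_of_mem hyz]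
        · have hzy : z ∉ cls f C y := fun h => hyz (mem_cls_comm.mp h)
          rw [if_neg (fun hc => hzy hc.1), if_neg hyz]
      rw [Finset.sum_congr rfl congr1, ← Finset.sum_filter]
      have hfil : (Set.toFinite T).toFinset.filter (· ∈ cls f C z)
          = Finset.univ.filter (· ∈ cls f C z) := by
        ext y
        simp only [Finset.mem_filter, Set.Finite.mem_toFinset, Finset.mem_univ, true_and]
        exact ⟨fun h => h.2, fun h => ⟨hsat z hzT h, h⟩⟩
      rw [hfil, Finset.sum_const, ← ncard_eq_card_filter]
      have hpos : (0:ℝ) < ((cls f C z).ncard : ℝ) := by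
        exact_mod_cast cls_ncard_pos f C z
      rw [nsmul_eq_mul]
      field_simp
    · rw [if_neg hz]
      apply Finset.sum_eq_zero
      intro y hy
      rw [Set.Finite.mem_toFinset] at hy
      rw [if_neg]
      rintro ⟨hzc, hzY⟩
      exact hz ⟨hsat y hy hzc, hzY⟩
  rw [Finset.sum_congr rfl (fun z _ => inner z), ← Finset.sum_filter,
    Finset.sum_const, ← ncard_eq_card_filter]
  simp

end Aux

section Aux2
set_option linter.unusedSectionVars false
variable {U V A : Type*} [Fintype U]

lemma exists_aprUp_of_mem {f : A → U → V} {R C : Finset A} (hRC : R ⊆ C)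
    {β : ℝ} {Y : Set U} {x : U} (hx : x ∈ aprUp f R β Y) :
    ∃ y ∈ cls f R x, y ∈ aprUp f C β Y := by
  classical
  set T := cls f R x with hT
  have hsat : ∀ y ∈ T, cls f C y ⊆ T := by
    intro y hy
    have h1 : cls f C y ⊆ cls f R y := cls_anti hRC y
    rwa [cls_eq_of_mem hy] at h1
  have hsum := sum_ratio f C Y T hsat
  have hx' : β * (T.ncard : ℝ) < ((T ∩ Y).ncard : ℝ) := hx
  rw [← hsum] at hx'
  have hcard : ((Set.toFinite T).toFinset.card : ℝ) = (T.ncard : ℝ) := by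
    rw [Set.ncard_eq_toFinset_card]
  have hβ : β * (T.ncard : ℝ) = ∑ _y ∈ (Set.toFinite T).toFinset, β := by
    rw [Finset.sum_const, nsmul_eq_mul, hcard]; ring
  rw [hβ] at hx'
  obtain ⟨y, hyT, hy⟩ := Finset.exists_lt_of_sum_lt hx'
  rw [Set.Finite.mem_toFinset] at hyT
  refine ⟨y, hyT, ?_⟩
  have hpos : (0:ℝ) < ((cls f C y).ncard : ℝ) := by exact_mod_cast cls_ncard_pos f C y
  exact (lt_div_iff₀ hpos).mp hy

lemma mem_aprUp_of_forall {f : A → U → V} {R C : Finset A} (hRC : R ⊆ C)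
    {β : ℝ} {Y : Set U} {x : U}
    (hall : ∀ y ∈ cls f R x, y ∈ aprUp f C β Y) : x ∈ aprUp f R β Y := by
  classical
  set T := cls f R x with hT
  have hsat : ∀ y ∈ T, cls f C y ⊆ T := by
    intro y hy
    have h1 : cls f C y ⊆ cls f R y := cls_anti hRC y
    rwa [cls_eq_of_mem hy] at h1
  have hsum := sum_ratio f C Y T hsat
  show β * (T.ncard : ℝ) < ((T ∩ Y).ncard : ℝ)
  rw [← hsum]
  have hcard : ((Set.toFinite T).toFinset.card : ℝ) = (T.ncard : ℝ) := by
    rw [Set.ncard_eq_toFinset_card]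
  have hβ : β * (T.ncard : ℝ) = ∑ _y ∈ (Set.toFinite T).toFinset, β := by
    rw [Finset.sum_const, nsmul_eq_mul, hcard]; ring
  rw [hβ]
  apply Finset.sum_lt_sum_of_nonempty
  · exact ⟨x, (Set.Finite.mem_toFinset _).mpr (mem_cls_self f R x)⟩
  · intro y hy
    rw [Set.Finite.mem_toFinset] at hy
    have hpos : (0:ℝ) < ((cls f C y).ncard : ℝ) := by exact_mod_cast cls_ncard_pos f C y
    exact (lt_div_iff₀ hpos).mpr (hall y hy)

lemma aprUp_invariant {f : A → U → V} {R : Finset A} {β : ℝ} {Y : Set U} {x y : U}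
    (h : y ∈ cls f R x) (hy : y ∈ aprUp f R β Y) : x ∈ aprUp f R β Y := by
  have hc := cls_eq_of_mem h
  show β * ((cls f R x).ncard : ℝ) < (((cls f R x) ∩ Y).ncard : ℝ)
  rw [← hc]
  exact hy

lemma subset_upperA (f : A → U → V) (R : Finset A) (S : Set U) : S ⊆ upperA f R S :=
  fun x hx => ⟨x, mem_cls_self f R x, hx⟩

lemma upperA_anti {f : A → U → V} {R R' : Finset A} (h : R ⊆ R') (S : Set U) :
    upperA f R' S ⊆ upperA f R S := by
  rintro x ⟨y, hyc, hyS⟩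
  exact ⟨y, cls_anti h x hyc, hyS⟩

lemma upperA_eq_of_consistent {f : A → U → V} {R C : Finset A} {β : ℝ} {Y : Set U}
    (h : aprUp f R β Y = aprUp f C β Y) :
    upperA f R (aprUp f C β Y) = aprUp f C β Y := by
  apply Set.Subset.antisymm _ (subset_upperA f R _)
  rintro x ⟨y, hyc, hyS⟩
  rw [← h] at hyS ⊢
  exact aprUp_invariant hyc hyS

lemma consistent_of_upperA_eq {f : A → U → V} {R C : Finset A} (hRC : R ⊆ C)
    {β : ℝ} {Y : Set U}
    (h : upperA f R (aprUp f C β Y) = aprUp f C β Y) :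
    aprUp f R β Y = aprUp f C β Y := by
  ext x
  constructor
  · intro hx
    obtain ⟨y, hyT, hy⟩ := exists_aprUp_of_mem hRC hx
    rw [← h]
    exact ⟨y, hyT, hy⟩
  · intro hx
    apply mem_aprUp_of_forall hRC
    intro y hy
    rw [← h]
    exact ⟨x, mem_cls_comm.mp hy, hx⟩

end Aux2


section Aux3
set_option linter.unusedSectionVars false
variable {U V A : Type*} [Fintype U] [Nonempty U] [DecidableEq V]

lemma consistent_iff_mu {f : A → U → V} {C : Finset A} {d : U → V} {β : ℝ}
    {R : Finset A} (hRC : R ⊆ C) :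
    UpperConsistent f C d β R ↔ mu f C d β R = mu f C d β C := by
  classical
  set S : V → Set U := fun v => aprUp f C β (d ⁻¹' {v}) with hS
  have hCfix : ∀ v, upperA f C (S v) = S v := fun v => upperA_eq_of_consistent rfl
  have hsub : ∀ v, S v ⊆ upperA f R (S v) := fun v => subset_upperA f R (S v)
  have hle : ∀ v ∈ Finset.univ.image d,
      ((upperA f C (S v)).ncard : ℝ) ≤ ((upperA f R (S v)).ncard : ℝ) := by
    intro v _
    rw [hCfix v]
    exact_mod_cast Set.ncard_le_ncard (hsub v) (Set.toFinite _)
  have hD : ((Fintype.card U : ℝ) * ((Finset.univ.image d).card : ℝ)) ≠ 0 := by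
    have h1 : 0 < Fintype.card U := Fintype.card_pos
    have h2 : 0 < (Finset.univ.image d).card :=
      Finset.card_pos.mpr (Finset.Nonempty.image Finset.univ_nonempty d)
    positivity
  have hmu : mu f C d β R = mu f C d β C ↔
      ∀ v ∈ Finset.univ.image d,
        ((upperA f C (S v)).ncard : ℝ) = ((upperA f R (S v)).ncard : ℝ) := by
    unfold mu
    rw [div_left_inj' hD]
    rw [eq_comm]
    exact Finset.sum_eq_sum_iff_of_le hle
  rw [hmu]
  unfold UpperConsistent
  constructor
  · intro h v hv
    rw [hCfix v]
    simp only [hS]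
    rw [upperA_eq_of_consistent (h v hv)]
  · intro h v hv
    apply consistent_of_upperA_eq hRC
    have h1 : (S v).ncard = (upperA f R (S v)).ncard := by
      have := h v hv
      rw [hCfix v] at this
      exact_mod_cast this
    exact (Set.eq_of_subset_of_ncard_le (hsub v) h1.ge (Set.toFinite _)).symm

end Aux3

section Aux4
set_option linter.unusedSectionVars false
variable {U V A : Type*} [Fintype U] [Nonempty U] [DecidableEq V] [DecidableEq A]

lemma consistent_mono {f : A → U → V} {C : Finset A} {d : U → V} {β : ℝ}
    {R R' : Finset A} (hRR' : R ⊆ R') (hR'C : R' ⊆ C)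
    (h : UpperConsistent f C d β R) : UpperConsistent f C d β R' := by
  intro v hv
  apply consistent_of_upperA_eq hR'C
  apply Set.Subset.antisymm _ (subset_upperA f R' _)
  have h1 := upperA_eq_of_consistent (h v hv)
  exact (upperA_anti hRR' _).trans h1.le

lemma exists_reduct {f : A → U → V} {C : Finset A} {d : U → V} {β : ℝ}
    (R0 : Finset A) :
    UpperConsistent f C d β R0 → ∃ R ⊆ R0, UpperReduct f C d β R := by
  induction R0 using Finset.strongInduction with
  | _ R0 ih =>
    intro h
    by_cases hmin : ∃ R' ⊂ R0, UpperConsistent f C d β R'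
    · obtain ⟨R', hR', hc⟩ := hmin
      obtain ⟨R, hRR, hred⟩ := ih R' hR' hc
      exact ⟨R, hRR.trans hR'.subset, hred⟩
    · push_neg at hmin
      exact ⟨R0, subset_rfl, h, fun R' hR' => hmin R' hR'⟩

end Aux4


theorem mem_upper_core_iff {U V A : Type*} [Fintype U] [Nonempty U]
    [DecidableEq V] [DecidableEq A] (f : A → U → V) (C : Finset A) (d : U → V)
    (α β : ℝ) (hβ0 : 0 ≤ β) (hβα : β < α) (hα1 : α ≤ 1)
    (c : A) (hc : c ∈ C) :
    (∀ R ⊆ C, UpperReduct f C d β R → c ∈ R) ↔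
      mu f C d β (C.erase c) ≠ mu f C d β C := by
  constructor
  · intro H heq
    have hcons : UpperConsistent f C d β (C.erase c) :=
      (consistent_iff_mu (Finset.erase_subset c C)).mpr heq
    obtain ⟨R, hRe, hred⟩ := exists_reduct (C.erase c) hcons
    have hcR : c ∈ R := H R (hRe.trans (Finset.erase_subset c C)) hred
    exact Finset.notMem_erase c C (hRe hcR)
  · intro hne R hRC hred
    by_contra hc'
    have hRe : R ⊆ C.erase c := Finset.subset_erase.mpr ⟨hRC, hc'⟩
    have hcons : UpperConsistent f C d β (C.erase c) :=
      consistent_mono hRe (Finset.erase_subset c C) hred.1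
    exact hne ((consistent_iff_mu (Finset.erase_subset c C)).mp hcons)
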